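/- Let 0 < ε ≤ 0.1 and n ≥ 10, and let T be a positive integer with 4ε²·T ≤ ln(n/10). Then for every event E ⊆ Ω^T, | P_mix^T(E) − P_0^T(E) | ≤ 1/4. -/

import Mathlib

open scoped BigOperators

/-- The sample space of a single round: an advice vector `a ∈ {0,1}ⁿ`
and a correct-arm indicator `c ∈ {0,1}`. -/
abbrev Omg (n : ℕ) := (Fin n → Bool) × Bool

/-- Under `P0`, the advice vector is uniform on `{0,1}ⁿ` and the correct-arm
indicator is uniform on `{0,1}`, independently. -/
noncomputable def P0 (n : ℕ) : Omg n → ℝ := fun _ => (1 / 2 : ℝ) ^ (n + 1)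

/-- Under `Pv n ε v`, the advice vector is uniform on `{0,1}ⁿ` and, conditionally on it,
the correct-arm indicator equals its `v`-th entry with probability `1/2 + ε`. -/
noncomputable def Pv (n : ℕ) (ε : ℝ) (v : Fin n) : Omg n → ℝ := fun w =>
  (1 / 2 : ℝ) ^ n * (if w.2 = w.1 v then 1 / 2 + ε else 1 / 2 - ε)

/-- `T`-fold product of a probability mass function on `Omg n`. -/
noncomputable def prodP {n : ℕ} (T : ℕ) (P : Omg n → ℝ) : (Fin T → Omg n) → ℝ :=
  fun g => ∏ t, P (g t)

/-- The uniform mixture `P_mix^T = (1/n) Σ_v P_v^T`. -/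
noncomputable def Pmix (n : ℕ) (ε : ℝ) (T : ℕ) : (Fin T → Omg n) → ℝ := fun g =>
  (1 / (n : ℝ)) * ∑ v : Fin n, prodP T (Pv n ε v) g

-- q sums
lemma qsum (ε : ℝ) (c : Bool) :
    ∑ x : Bool, (if c = x then 1/2 + ε else 1/2 - ε) = 1 := by
  cases c <;> simp [Fintype.sum_bool] <;> ring

lemma qsum_sq (ε : ℝ) (c : Bool) :
    ∑ x : Bool, (if c = x then 1/2 + ε else 1/2 - ε)^2 = 1/2 + 2*ε^2 := by
  cases c <;> simp [Fintype.sum_bool] <;> ring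

-- spike factorization
lemma spike {n : ℕ} (f : Bool → ℝ) (u : Fin n) (a : Fin n → Bool) :
    ∏ i : Fin n, (if i = u then f (a i) else 1) = f (a u) := by
  simp [Finset.prod_ite_eq']

lemma sum_pi_two {n : ℕ} (f g : Bool → ℝ) (u v : Fin n) :
    ∑ a : Fin n → Bool, f (a u) * g (a v)
      = ∏ i : Fin n, ∑ x : Bool, ((if i = u then f x else 1) * (if i = v then g x else 1)) := by
  rw [Fintype.prod_sum]
  refine Finset.sum_congr rfl fun a _ => ?_
  rw [Finset.prod_mul_distrib, spike, spike]

lemma prod_if_single {n : ℕ} (u : Fin n) (A B : ℝ) :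
    ∏ i : Fin n, (if i = u then A else B) = A * B^(n-1) := by
  rw [← Finset.mul_prod_erase Finset.univ _ (Finset.mem_univ u)]
  rw [if_pos rfl]
  congr 1
  rw [Finset.prod_congr rfl (fun i hi => if_neg (Finset.ne_of_mem_erase hi)),
    Finset.prod_const, Finset.card_erase_of_mem (Finset.mem_univ u), Finset.card_univ,
    Fintype.card_fin]

lemma prod_if_pair {n : ℕ} (u v : Fin n) (huv : u ≠ v) (A B C : ℝ) :
    ∏ i : Fin n, (if i = u then A else if i = v then B else C) = A * B * C^(n-2) := by
  rw [← Finset.mul_prod_erase Finset.univ _ (Finset.mem_univ u), if_pos rfl]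
  have hv : v ∈ Finset.univ.erase u := Finset.mem_erase.2 ⟨huv.symm, Finset.mem_univ v⟩
  rw [← Finset.mul_prod_erase _ _ hv, if_neg huv.symm, if_pos rfl, ← mul_assoc]
  congr 1
  have hcard : ((Finset.univ.erase u).erase v).card = n - 2 := by
    rw [Finset.card_erase_of_mem hv, Finset.card_erase_of_mem (Finset.mem_univ u),
      Finset.card_univ, Fintype.card_fin]
    omega
  rw [Finset.prod_congr rfl (fun i hi => ?_), Finset.prod_const, hcard]
  have h1 := Finset.ne_of_mem_erase hi
  have h2 := Finset.ne_of_mem_erase (Finset.mem_of_mem_erase hi)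
  rw [if_neg h2, if_neg h1]

lemma single_round (n : ℕ) (ε : ℝ) (u v : Fin n) :
    ∑ w : Omg n, Pv n ε u w * Pv n ε v w
      = (1/2:ℝ)^(n+1) * (if u = v then 1 + 4*ε^2 else 1) := by
  have hn1 : 1 ≤ n := u.pos
  have h3 : ((1:ℝ)/2)^n * 2^n = 1 := by
    rw [← mul_pow]; norm_num
  rw [Fintype.sum_prod_type]
  simp only [Pv]
  have key : ∀ a : Fin n → Bool, ∀ c : Bool,
      (1/2:ℝ)^n * (if c = a u then 1/2 + ε else 1/2 - ε) *
        ((1/2:ℝ)^n * (if c = a v then 1/2 + ε else 1/2 - ε))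
      = (1/2:ℝ)^n * (1/2:ℝ)^n *
        ((if c = a u then 1/2 + ε else 1/2 - ε) * (if c = a v then 1/2 + ε else 1/2 - ε)) := by
    intro a c; ring
  simp only [key]
  rw [Finset.sum_comm]
  rw [Finset.sum_congr rfl (fun c _ => (Finset.mul_sum _ _ _).symm)]
  rw [Finset.sum_congr rfl (fun c _ => by
    rw [sum_pi_two (fun x => if c = x then 1/2 + ε else 1/2 - ε)
      (fun x => if c = x then 1/2 + ε else 1/2 - ε) u v])]
  by_cases huv : u = v
  · subst huv
    rw [if_pos rfl]
    have inner : ∀ c : Bool, ∀ i : Fin n,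
        (∑ x : Bool, ((if i = u then if c = x then 1/2 + ε else 1/2 - ε else 1) *
          (if i = u then if c = x then 1/2 + ε else 1/2 - ε else 1)))
        = if i = u then 1/2 + 2*ε^2 else 2 := by
      intro c i
      by_cases h : i = u
      · simp only [if_pos h]
        cases c <;> simp [Fintype.sum_bool] <;> ring
      · simp [h]
    rw [Finset.sum_congr rfl (fun c _ => by
      rw [Finset.prod_congr rfl (fun i _ => inner c i), prod_if_single])]
    rw [Fintype.sum_bool]
    have h2 : (2:ℝ)^(n-1) * 2 = 2^n := by
      rw [← pow_succ]; congr 1; omega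
    have e1 : (1/2:ℝ)^n * (1/2)^n * ((1/2 + 2*ε^2) * 2^(n-1)) +
        (1/2:ℝ)^n * (1/2)^n * ((1/2 + 2*ε^2) * 2^(n-1))
        = (1/2:ℝ)^n * ((1/2)^n * (2^(n-1) * 2)) * (1/2 + 2*ε^2) := by
      ring
    rw [e1, h2, h3, mul_one, pow_succ]; ring
  · rw [if_neg huv]
    have hn2 : 2 ≤ n := by
      have : 1 < Fintype.card (Fin n) := Fintype.one_lt_card_iff.2 ⟨u, v, huv⟩
      simp [Fintype.card_fin] at this; omega
    have inner : ∀ c : Bool, ∀ i : Fin n,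
        (∑ x : Bool, ((if i = u then if c = x then 1/2 + ε else 1/2 - ε else 1) *
          (if i = v then if c = x then 1/2 + ε else 1/2 - ε else 1)))
        = if i = u then 1 else if i = v then 1 else 2 := by
      intro c i
      by_cases h : i = u
      · have h' : ¬ i = v := fun hv' => huv (h.symm.trans hv')
        simp only [if_pos h, if_neg h']
        cases c <;> simp [Fintype.sum_bool] <;> ring
      · simp only [if_neg h]
        by_cases h' : i = v
        · simp only [if_pos h']
          cases c <;> simp [Fintype.sum_bool] <;> ring
        · simp [h']
    rw [Finset.sum_congr rfl (fun c _ => by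
      rw [Finset.prod_congr rfl (fun i _ => inner c i), prod_if_pair u v huv])]
    rw [Fintype.sum_bool]
    have h5 : (2:ℝ)^(n-2) * 2 * 2 = 2^n := by
      rw [← pow_succ, ← pow_succ]; congr 1; omega
    have e1 : (1/2:ℝ)^n * (1/2)^n * (1 * 1 * 2^(n-2)) +
        (1/2:ℝ)^n * (1/2)^n * (1 * 1 * 2^(n-2))
        = (1/2:ℝ)^n * ((1/2)^n * (2^(n-2) * 2 * 2)) * (1/2) := by
      ring
    rw [e1, h5, h3, pow_succ]; ring

lemma qsum' (ε : ℝ) (x : Bool) :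
    ∑ c : Bool, (if c = x then 1/2 + ε else 1/2 - ε) = 1 := by
  cases x <;> simp [Fintype.sum_bool] <;> ring

lemma sum_Pv (n : ℕ) (ε : ℝ) (v : Fin n) : ∑ w : Omg n, Pv n ε v w = 1 := by
  rw [Fintype.sum_prod_type]
  simp only [Pv]
  rw [Finset.sum_congr rfl (fun a _ => by
    rw [← Finset.mul_sum, qsum' ε (a v), mul_one])]
  rw [Finset.sum_const, Finset.card_univ]
  simp only [Fintype.card_pi, Fintype.card_bool, Finset.prod_const, Finset.card_univ,
    Fintype.card_fin, nsmul_eq_mul]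
  push_cast
  rw [← mul_pow]; norm_num

lemma sum_P0 (n : ℕ) : ∑ w : Omg n, P0 n w = 1 := by
  simp only [P0]
  rw [Finset.sum_const, Finset.card_univ, nsmul_eq_mul]
  have : (Fintype.card (Omg n) : ℝ) = 2^(n+1) := by
    simp [Fintype.card_prod, Fintype.card_pi, pow_succ]
  rw [this, ← mul_pow]; norm_num

lemma sum_prodP_mul {n : ℕ} (T : ℕ) (P Q : Omg n → ℝ) :
    ∑ g : Fin T → Omg n, prodP T P g * prodP T Q g = (∑ w : Omg n, P w * Q w)^T := by
  simp only [prodP, ← Finset.prod_mul_distrib]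
  rw [← Fintype.prod_sum (fun (_ : Fin T) (w : Omg n) => P w * Q w)]
  rw [Finset.prod_const, Finset.card_univ, Fintype.card_fin]

lemma sum_prodP {n : ℕ} (T : ℕ) (P : Omg n → ℝ) :
    ∑ g : Fin T → Omg n, prodP T P g = (∑ w : Omg n, P w)^T := by
  simp only [prodP]
  rw [← Fintype.prod_sum (fun (_ : Fin T) (w : Omg n) => P w)]
  rw [Finset.prod_const, Finset.card_univ, Fintype.card_fin]

lemma prodP_P0 {n : ℕ} (T : ℕ) (g : Fin T → Omg n) :
    prodP T (P0 n) g = ((1/2:ℝ)^(n+1))^T := by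
  simp [prodP, P0]

lemma sum_ite_pairs (n : ℕ) (X Y : ℝ) :
    ∑ u : Fin n, ∑ v : Fin n, (if u = v then X else Y)
      = n * X + n * ((n:ℝ) - 1) * Y := by
  have h1 : ∀ u : Fin n, ∑ v : Fin n, (if u = v then X else Y) = X + ((n:ℝ) - 1) * Y := by
    intro u
    have e : ∀ v : Fin n, (if u = v then X else Y) = (if u = v then X - Y else 0) + Y := by
      intro v; by_cases h : u = v <;> simp [h]
    rw [Finset.sum_congr rfl (fun v _ => e v), Finset.sum_add_distrib, Finset.sum_ite_eq,
      if_pos (Finset.mem_univ u), Finset.sum_const, Finset.card_univ, Fintype.card_fin,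
      nsmul_eq_mul]
    ring
  rw [Finset.sum_congr rfl (fun u _ => h1 u), Finset.sum_const, Finset.card_univ,
    Fintype.card_fin, nsmul_eq_mul]
  ring

lemma sum_Pmix_sq (n T : ℕ) (ε : ℝ) (hn : 1 ≤ n) :
    ∑ g : Fin T → Omg n, (Pmix n ε T g)^2
      = (1/(n:ℝ)) * (((1/2:ℝ)^(n+1))^T * (1 + 4*ε^2)^T)
        + (1 - 1/(n:ℝ)) * ((1/2:ℝ)^(n+1))^T := by
  have hn0 : (0:ℝ) < (n:ℝ) := by exact_mod_cast hn
  have step : ∀ g : Fin T → Omg n, (Pmix n ε T g)^2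
      = (1/(n:ℝ))^2 * ∑ u : Fin n, ∑ v : Fin n,
          prodP T (Pv n ε u) g * prodP T (Pv n ε v) g := by
    intro g
    simp only [Pmix]
    rw [mul_pow]
    congr 1
    rw [sq, Finset.sum_mul_sum]
  rw [Finset.sum_congr rfl (fun g _ => step g), ← Finset.mul_sum]
  have swap : ∑ g : Fin T → Omg n, ∑ u : Fin n, ∑ v : Fin n,
        prodP T (Pv n ε u) g * prodP T (Pv n ε v) g
      = ∑ u : Fin n, ∑ v : Fin n, ∑ g : Fin T → Omg n,
        prodP T (Pv n ε u) g * prodP T (Pv n ε v) g := by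
    rw [Finset.sum_comm]
    exact Finset.sum_congr rfl fun u _ => Finset.sum_comm
  rw [swap]
  have inner : ∀ u v : Fin n, ∑ g : Fin T → Omg n,
        prodP T (Pv n ε u) g * prodP T (Pv n ε v) g
      = if u = v then ((1/2:ℝ)^(n+1))^T * (1 + 4*ε^2)^T else ((1/2:ℝ)^(n+1))^T := by
    intro u v
    rw [sum_prodP_mul, single_round, mul_pow, apply_ite (· ^ T), one_pow, mul_ite, mul_one]
  rw [Finset.sum_congr rfl (fun u _ => Finset.sum_congr rfl (fun v _ => inner u v)),
    sum_ite_pairs]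
  field_simp


/-- if `4ε²T ≤ ln(n/10)` then for every event `E ⊆ Ω^T`,
`|P_mix^T(E) − P_0^T(E)| ≤ 1/4`. -/
theorem stmt10 (n T : ℕ) (ε : ℝ) (hε : 0 < ε) (hε' : ε ≤ 0.1) (hn : 10 ≤ n) (hT : 1 ≤ T)
    (hεT : 4 * ε ^ 2 * (T : ℝ) ≤ Real.log ((n : ℝ) / 10))
    (E : Finset (Fin T → Omg n)) :
    |(∑ g ∈ E, Pmix n ε T g) - ∑ g ∈ E, prodP T (P0 n) g| ≤ 1 / 4 := by
  have hn1 : 1 ≤ n := by omega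
  have hn0 : (0:ℝ) < (n:ℝ) := by exact_mod_cast hn1
  set p : ℝ := ((1/2:ℝ)^(n+1))^T with hp
  have hppos : 0 < p := by positivity
  set Δ : (Fin T → Omg n) → ℝ := fun g => Pmix n ε T g - prodP T (P0 n) g with hΔ
  -- total masses
  have hmix1 : ∑ g : Fin T → Omg n, Pmix n ε T g = 1 := by
    simp only [Pmix]
    rw [← Finset.mul_sum, Finset.sum_comm]
    rw [Finset.sum_congr rfl (fun v _ => by rw [sum_prodP, sum_Pv, one_pow])]
    rw [Finset.sum_const, Finset.card_univ, Fintype.card_fin, nsmul_eq_mul, mul_one]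
    field_simp
  have hP01 : ∑ g : Fin T → Omg n, prodP T (P0 n) g = 1 := by
    rw [sum_prodP, sum_P0, one_pow]
  have hsum0 : ∑ g : Fin T → Omg n, Δ g = 0 := by
    simp only [hΔ, Finset.sum_sub_distrib, hmix1, hP01, sub_self]
  -- card * p = 1
  have hcard : (Fintype.card (Fin T → Omg n) : ℝ) = ((2:ℝ)^(n+1))^T := by
    simp [Fintype.card_fun, Fintype.card_prod, Fintype.card_pi, pow_succ]
  have hNp : (Fintype.card (Fin T → Omg n) : ℝ) * p = 1 := by
    rw [hcard, hp, ← mul_pow, ← mul_pow]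
    norm_num
  -- sum of squares of Δ
  have hsq : ∑ g : Fin T → Omg n, (Δ g)^2 = (1/(n:ℝ)) * p * ((1 + 4*ε^2)^T - 1) := by
    have expand : ∀ g : Fin T → Omg n, (Δ g)^2
        = (Pmix n ε T g)^2 - 2*p*(Pmix n ε T g) + p^2 := by
      intro g
      simp only [hΔ, prodP_P0, ← hp]
      ring
    rw [Finset.sum_congr rfl (fun g _ => expand g)]
    rw [Finset.sum_add_distrib, Finset.sum_sub_distrib, ← Finset.mul_sum, hmix1,
      sum_Pmix_sq n T ε hn1, Finset.sum_const, Finset.card_univ, nsmul_eq_mul]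
    rw [← hp]
    have : (Fintype.card (Fin T → Omg n) : ℝ) * p^2 = p := by
      rw [sq, ← mul_assoc, hNp, one_mul]
    rw [this]
    ring
  -- bound on (1+4ε²)^T
  have hkey : (1 + 4*ε^2)^T ≤ (n:ℝ)/10 := by
    have h1 : (1 + 4*ε^2) ≤ Real.exp (4*ε^2) := by
      have := Real.add_one_le_exp (4*ε^2)
      linarith
    have h2 : (1 + 4*ε^2)^T ≤ (Real.exp (4*ε^2))^T := by
      apply pow_le_pow_left₀ (by positivity) h1
    have h3 : (Real.exp (4*ε^2))^T = Real.exp (4*ε^2*(T:ℝ)) := by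
      rw [← Real.exp_nat_mul]
      ring_nf
    have h4 : Real.exp (4*ε^2*(T:ℝ)) ≤ (n:ℝ)/10 := by
      have hn10 : (0:ℝ) < (n:ℝ)/10 := by positivity
      calc Real.exp (4*ε^2*(T:ℝ)) ≤ Real.exp (Real.log ((n:ℝ)/10)) := Real.exp_le_exp.2 hεT
        _ = (n:ℝ)/10 := Real.exp_log hn10
    calc (1 + 4*ε^2)^T ≤ (Real.exp (4*ε^2))^T := h2
      _ = Real.exp (4*ε^2*(T:ℝ)) := h3
      _ ≤ (n:ℝ)/10 := h4
  -- S := total variation sum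
  set S : ℝ := ∑ g : Fin T → Omg n, |Δ g| with hS
  have hS0 : 0 ≤ S := Finset.sum_nonneg fun g _ => abs_nonneg _
  have hSsq : S^2 ≤ 1/10 := by
    have cs : S^2 ≤ (Fintype.card (Fin T → Omg n) : ℝ) * ∑ g : Fin T → Omg n, |Δ g|^2 := by
      simpa [hS, Finset.card_univ] using
        sq_sum_le_card_mul_sum_sq (s := (Finset.univ : Finset (Fin T → Omg n)))
          (f := fun g => |Δ g|)
    have e1 : ∑ g : Fin T → Omg n, |Δ g|^2 = ∑ g : Fin T → Omg n, (Δ g)^2 := by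
      exact Finset.sum_congr rfl fun g _ => sq_abs _
    rw [e1, hsq] at cs
    have e2 : (Fintype.card (Fin T → Omg n) : ℝ) * ((1/(n:ℝ)) * p * ((1 + 4*ε^2)^T - 1))
        = (1/(n:ℝ)) * ((1 + 4*ε^2)^T - 1) := by
      have : (Fintype.card (Fin T → Omg n) : ℝ) * ((1/(n:ℝ)) * p * ((1 + 4*ε^2)^T - 1))
          = ((Fintype.card (Fin T → Omg n) : ℝ) * p) * ((1/(n:ℝ)) * ((1 + 4*ε^2)^T - 1)) := by
        ring
      rw [this, hNp, one_mul]
    rw [e2] at cs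
    have : (1/(n:ℝ)) * ((1 + 4*ε^2)^T - 1) ≤ 1/10 := by
      have h5 : (1 + 4*ε^2)^T - 1 ≤ (n:ℝ)/10 - 1 := by linarith
      have h6 : (1/(n:ℝ)) * ((1 + 4*ε^2)^T - 1) ≤ (1/(n:ℝ)) * ((n:ℝ)/10 - 1) := by
        apply mul_le_mul_of_nonneg_left h5 (by positivity)
      have h7 : (1/(n:ℝ)) * ((n:ℝ)/10 - 1) = 1/10 - 1/(n:ℝ) := by
        field_simp
      have h8 : (0:ℝ) < 1/(n:ℝ) := by positivity
      linarith
    linarith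
  have hShalf : S ≤ 1/2 := by nlinarith
  -- final: |∑_E Δ| ≤ S/2
  have hgoal : |∑ g ∈ E, Δ g| ≤ S/2 := by
    have hsplit : ∑ g ∈ E, Δ g + ∑ g ∈ Finset.univ \ E, Δ g = 0 := by
      rw [add_comm, Finset.sum_sdiff (Finset.subset_univ E)]
      exact hsum0
    have habs1 : |∑ g ∈ E, Δ g| ≤ ∑ g ∈ E, |Δ g| := Finset.abs_sum_le_sum_abs _ _
    have habs2 : |∑ g ∈ Finset.univ \ E, Δ g| ≤ ∑ g ∈ Finset.univ \ E, |Δ g| :=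
      Finset.abs_sum_le_sum_abs _ _
    have hSsplit : ∑ g ∈ E, |Δ g| + ∑ g ∈ Finset.univ \ E, |Δ g| = S := by
      rw [add_comm, Finset.sum_sdiff (Finset.subset_univ E)]
    have heq : |∑ g ∈ Finset.univ \ E, Δ g| = |∑ g ∈ E, Δ g| := by
      rw [show ∑ g ∈ Finset.univ \ E, Δ g = -(∑ g ∈ E, Δ g) by linarith, abs_neg]
    linarith
  have : (∑ g ∈ E, Pmix n ε T g) - ∑ g ∈ E, prodP T (P0 n) g = ∑ g ∈ E, Δ g := by
    rw [Finset.sum_sub_distrib]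
  rw [this]
  linarith
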